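/- Let I ⊆ S be a monomial ideal generated in a single degree d which has linear quotients with respect to the ordering u_1,…,u_m of G(I), and let c = (c_1,…,c_n) be a vector of non-negative integers. Let u_{i_1},…,u_{i_s} with i_1 < i_2 < … < i_s be the c-bounded elements of G(I). Then I^{≤c} = (u_{i_1},…,u_{i_s}) has linear quotients with respect to this induced ordering u_{i_1},…,u_{i_s}. -/

import Mathlib

open MvPolynomial

/-- if a monomial ideal `I`, minimally generated in the single degree `d` by the
pairwise distinct monomials `u_1, …, u_m`, has linear quotients with respect to this ordering,
then for any bound vector `c` the ideal `I^{≤c}` generated by the `c`-bounded `u_i` has linear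
quotients with respect to the induced ordering. -/
theorem stmt_2 {K : Type*} [Field K] {n m : ℕ} (c : Fin n → ℕ) (d : ℕ)
    (u : Fin m → (Fin n →₀ ℕ)) (hinj : Function.Injective u)
    (hdeg : ∀ i, (∑ k, u i k) = d)
    (hlq : ∀ j : Fin m, ∃ T : Set (Fin n),
      Submodule.colon
        (Ideal.span {p : MvPolynomial (Fin n) K | ∃ i, i < j ∧ p = monomial (u i) 1})
        (Ideal.span {(monomial (u j) (1 : K))})
      = Ideal.span (MvPolynomial.X '' T)) :
    ∀ j : Fin m, (∀ k, u j k ≤ c k) → ∃ T : Set (Fin n),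
      Submodule.colon
        (Ideal.span {p : MvPolynomial (Fin n) K |
          ∃ i, i < j ∧ (∀ k, u i k ≤ c k) ∧ p = monomial (u i) 1})
        (Ideal.span {(monomial (u j) (1 : K))})
      = Ideal.span (MvPolynomial.X '' T) := by
  classical
  intro j hj
  obtain ⟨T, hT⟩ := hlq j
  -- rewrite the generating sets as images under `monomial · 1`
  have hsetfull : {p : MvPolynomial (Fin n) K | ∃ i, i < j ∧ p = monomial (u i) 1}
      = (fun s => monomial s (1 : K)) '' {s | ∃ i, i < j ∧ s = u i} := by
    ext p
    constructor
    · rintro ⟨i, hij, rfl⟩; exact ⟨u i, ⟨i, hij, rfl⟩, rfl⟩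
    · rintro ⟨s, ⟨i, hij, rfl⟩, rfl⟩; exact ⟨i, hij, rfl⟩
  have hsetres : {p : MvPolynomial (Fin n) K |
        ∃ i, i < j ∧ (∀ k, u i k ≤ c k) ∧ p = monomial (u i) 1}
      = (fun s => monomial s (1 : K)) ''
        {s | ∃ i, i < j ∧ (∀ k, u i k ≤ c k) ∧ s = u i} := by
    ext p
    constructor
    · rintro ⟨i, hij, hib, rfl⟩; exact ⟨u i, ⟨i, hij, hib, rfl⟩, rfl⟩
    · rintro ⟨s, ⟨i, hij, hib, rfl⟩, rfl⟩; exact ⟨i, hij, hib, rfl⟩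
  -- key fact: for every `i < j` there is `k ∈ T` with `u j k < u i k`
  have key : ∀ i : Fin m, i < j → ∃ k ∈ T, u j k < u i k := by
    intro i hij
    have hv : (monomial (u i - u j) (1 : K)) ∈ Ideal.span (MvPolynomial.X '' T) := by
      rw [← hT]
      rw [show (Ideal.span {(monomial (u j) (1 : K))}) =
          Submodule.span (MvPolynomial (Fin n) K) {(monomial (u j) (1 : K))} from rfl]
      rw [Submodule.mem_colon_span_singleton, smul_eq_mul, monomial_mul, one_mul, hsetfull,
        mem_ideal_span_monomial_image]
      intro xi hxi
      rw [MvPolynomial.support_monomial] at hxi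
      simp only [if_neg (one_ne_zero : (1 : K) ≠ 0), Finset.mem_singleton] at hxi
      subst hxi
      exact ⟨u i, ⟨i, hij, rfl⟩, le_tsub_add⟩
    rw [mem_ideal_span_X_image] at hv
    obtain ⟨k, hkT, hk⟩ := hv (u i - u j) (by
      rw [MvPolynomial.support_monomial]
      simp [if_neg (one_ne_zero : (1 : K) ≠ 0)])
    refine ⟨k, hkT, ?_⟩
    rw [Finsupp.tsub_apply] at hk
    omega
  refine ⟨{k | k ∈ T ∧ u j k < c k}, le_antisymm ?_ ?_⟩
  · -- colon ⊆ span of variables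
    intro x hx
    rw [show (Ideal.span {(monomial (u j) (1 : K))}) =
        Submodule.span (MvPolynomial (Fin n) K) {(monomial (u j) (1 : K))} from rfl] at hx
    rw [Submodule.mem_colon_span_singleton, smul_eq_mul, hsetres,
      mem_ideal_span_monomial_image] at hx
    rw [mem_ideal_span_X_image]
    intro a ha
    have hmem : a + u j ∈ (x * monomial (u j) (1 : K)).support := by
      rw [MvPolynomial.mem_support_iff, MvPolynomial.coeff_mul_monomial, mul_one]
      exact MvPolynomial.mem_support_iff.mp ha
    obtain ⟨s, ⟨i, hij, hib, rfl⟩, hle⟩ := hx _ hmem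
    obtain ⟨k, hkT, hlt⟩ := key i hij
    have h1 : u i k ≤ a k + u j k := hle k
    exact ⟨k, ⟨hkT, lt_of_lt_of_le hlt (hib k)⟩, by omega⟩
  · -- span of variables ⊆ colon
    rw [Ideal.span_le]
    rintro p ⟨k, ⟨hkT, hkc⟩, rfl⟩
    have hXk : (MvPolynomial.X k : MvPolynomial (Fin n) K) ∈ Ideal.span (MvPolynomial.X '' T) :=
      Ideal.subset_span ⟨k, hkT, rfl⟩
    rw [← hT] at hXk
    rw [show (Ideal.span {(monomial (u j) (1 : K))}) =
        Submodule.span (MvPolynomial (Fin n) K) {(monomial (u j) (1 : K))} from rfl] at hXk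
    rw [Submodule.mem_colon_span_singleton, smul_eq_mul, hsetfull,
      mem_ideal_span_monomial_image] at hXk
    -- from `k ∈ T` obtain `i < j` with `u i ≤ single k 1 + u j`
    have hXmul : (MvPolynomial.X k : MvPolynomial (Fin n) K) * monomial (u j) 1
        = monomial (Finsupp.single k 1 + u j) 1 := by
      rw [MvPolynomial.X, monomial_mul, one_mul]
    obtain ⟨s, ⟨i, hij, rfl⟩, hle⟩ := hXk (Finsupp.single k 1 + u j) (by
      rw [hXmul, MvPolynomial.support_monomial]
      simp [if_neg (one_ne_zero : (1 : K) ≠ 0)])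
    -- `u i` is `c`-bounded
    have hib : ∀ l, u i l ≤ c l := by
      intro l
      have h0 := hle l
      rw [Finsupp.add_apply, Finsupp.single_apply] at h0
      by_cases h : k = l
      · rw [if_pos h] at h0; subst h; have h1 := hj k; omega
      · rw [if_neg h] at h0; have h1 := hj l; omega
    show (MvPolynomial.X k : MvPolynomial (Fin n) K) ∈ Submodule.colon _ _
    rw [show (Ideal.span {(monomial (u j) (1 : K))}) =
        Submodule.span (MvPolynomial (Fin n) K) {(monomial (u j) (1 : K))} from rfl]
    rw [Submodule.mem_colon_span_singleton, smul_eq_mul, hXmul, hsetres,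
      mem_ideal_span_monomial_image]
    intro xi hxi
    rw [MvPolynomial.support_monomial] at hxi
    simp only [if_neg (one_ne_zero : (1 : K) ≠ 0), Finset.mem_singleton] at hxi
    subst hxi
    exact ⟨u i, ⟨i, hij, hib, rfl⟩, hle⟩
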